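/- Let F : ℝ^r → ℝ^I be a linear map whose matrix has nonnegative integer entries and full rank r, restricting to an isomorphism of ℤ^r onto K = ker(V : ℤ^I → ℤ^d) and of ℕ^r onto K ∩ ℕ^I. Let 𝒴 ⊂ [0,1)^I be an open subset (in [0,1)^I) of the form {y : Σ_{j} y_{ij} < 1 for all i}. If x ∈ [0,1)^r satisfies {F}(x) = F(a) for some a ∈ ℝ^r with F(a) ∈ 𝒴, then a ∈ [0,1)^r and x = a; in particular F(x) ∈ 𝒴. -/
import Mathlib


/-- Key step in the equivalence of the Fano condition with Delaygue's criterion.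
F : ℝʳ → ℝᴵ is given by a nonnegative integer matrix of full rank r, identifying
ℤʳ with K and ℕʳ with K ∩ ℕᴵ (expressed by `hint` and `hpos`). If x ∈ [0,1)ʳ and
the fractional part of F(x) equals F(a) with F(a) ∈ 𝒴, then a ∈ [0,1)ʳ and x = a;
in particular F(x) ∈ 𝒴. -/
theorem stmt17 (p r : ℕ) (q : Fin p → ℕ) (M : (Σ i : Fin p, Fin (q i)) → Fin r → ℕ)
    (F : (Fin r → ℝ) → ((Σ i : Fin p, Fin (q i)) → ℝ))
    (hF : F = fun x s => ∑ l, (M s l : ℝ) * x l)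
    (hrank : Function.Injective F)
    (hpos : ∀ a : Fin r → ℝ, (∀ s, 0 ≤ F a s) → ∀ l, 0 ≤ a l)
    (hint : ∀ x : Fin r → ℝ, (∀ s, ∃ m : ℤ, F x s = (m : ℝ)) → ∀ l, ∃ m : ℤ, x l = (m : ℝ))
    (x a : Fin r → ℝ) (hx : ∀ l, x l ∈ Set.Ico (0 : ℝ) 1)
    (hfrac : ∀ s, Int.fract (F x s) = F a s)
    (hY : (∀ s, F a s ∈ Set.Ico (0 : ℝ) 1) ∧ ∀ i : Fin p, ∑ j, F a ⟨i, j⟩ < 1) :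
    (∀ l, a l ∈ Set.Ico (0 : ℝ) 1) ∧ x = a ∧
      ((∀ s, F x s ∈ Set.Ico (0 : ℝ) 1) ∧ ∀ i : Fin p, ∑ j, F x ⟨i, j⟩ < 1) := by
  have ha0 : ∀ l, 0 ≤ a l := hpos a (fun s => (hY.1 s).1)
  have hFx0 : ∀ s, 0 ≤ F x s := by
    intro s
    rw [hF]
    exact Finset.sum_nonneg fun l _ =>
      mul_nonneg (by positivity) (hx l).1
  set d : Fin r → ℝ := fun l => x l - a l with hd
  have hFd : ∀ s, F d s = F x s - F a s := by
    intro s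
    simp only [hF, hd, mul_sub, Finset.sum_sub_distrib]
  have hFdint : ∀ s, ∃ m : ℤ, F d s = (m : ℝ) := by
    intro s
    refine ⟨⌊F x s⌋, ?_⟩
    rw [hFd, ← hfrac s, Int.fract]
    ring
  have hFd0 : ∀ s, 0 ≤ F d s := by
    intro s
    obtain ⟨m, hm⟩ := hFdint s
    rw [hFd, ← hfrac s, Int.fract] at hm ⊢
    have : (0:ℝ) ≤ (⌊F x s⌋ : ℝ) := by
      exact_mod_cast Int.floor_nonneg.mpr (hFx0 s)
    linarith
  have hd0 : ∀ l, 0 ≤ d l := hpos d hFd0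
  have hdint : ∀ l, ∃ m : ℤ, d l = (m : ℝ) := hint d hFdint
  have hxa : x = a := by
    funext l
    obtain ⟨m, hm⟩ := hdint l
    have h1 : 0 ≤ d l := hd0 l
    have h2 : d l < 1 := by
      have := (hx l).2
      have := ha0 l
      simp only [hd]
      linarith
    have hm0 : m = 0 := by
      rw [hm] at h1 h2
      have h1' : (0:ℤ) ≤ m := by exact_mod_cast h1
      have h2' : m < 1 := by exact_mod_cast h2
      omega
    have : d l = 0 := by rw [hm, hm0]; simp
    simp only [hd] at this
    linarith
  refine ⟨fun l => hxa ▸ hx l, hxa, fun s => hxa ▸ hY.1 s, fun i => hxa ▸ hY.2 i⟩
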